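/- Let f be M-smooth and m-strongly convex over the PSD cone with condition number κ = M/m and minimizer X*. Define X⁰ = (1/M)·P₊(−∇f(0)). Then ‖X⁰ − X*‖_F² ≤ (κ² − 2/κ + 1)·‖X*‖_F². -/

import Mathlib

open Matrix

noncomputable def vnorm {m : Type*} [Fintype m] (v : m → ℝ) : ℝ :=
  Real.sqrt (∑ i, v i ^ 2)

noncomputable def frob {m n : Type*} [Fintype m] [Fintype n] (A : Matrix m n ℝ) : ℝ :=
  Real.sqrt (∑ i, ∑ j, A i j ^ 2)

/-- The spectral norm (largest singular value) of a real matrix. -/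
noncomputable def specNorm {m n : Type*} [Fintype m] [Fintype n] (A : Matrix m n ℝ) : ℝ :=
  sSup {c | ∃ x : n → ℝ, vnorm x = 1 ∧ c = vnorm (A.mulVec x)}

/-- The smallest singular value of a real matrix. -/
noncomputable def sigMin {m n : Type*} [Fintype m] [Fintype n] (A : Matrix m n ℝ) : ℝ :=
  sInf {c | ∃ x : n → ℝ, vnorm x = 1 ∧ c = vnorm (A.mulVec x)}

/-- `Dist U V`: the infimum of `‖U - V R‖_F` over orthogonal `R`. -/
noncomputable def FDist {n r : Type*} [Fintype n] [Fintype r] [DecidableEq r]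
    (U V : Matrix n r ℝ) : ℝ :=
  sInf {c | ∃ R : Matrix r r ℝ, Rᵀ * R = 1 ∧ c = frob (U - V * R)}

theorem Matrix.isHermitian_transpose_mul_self {m n α : Type*} [Fintype m] [NonUnitalSemiring α]
    [StarRing α] [TrivialStar α] (A : Matrix m n α) : (Aᵀ * A).IsHermitian := by
  rw [← Matrix.conjTranspose_eq_transpose_of_trivial]
  exact Matrix.isHermitian_conjTranspose_mul_self A

/-- The `i`-th largest singular value of a real matrix. -/
noncomputable def singVal {n m : ℕ} (A : Matrix (Fin n) (Fin m) ℝ) (i : Fin m) : ℝ :=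
  Real.sqrt ((Matrix.isHermitian_transpose_mul_self A).eigenvalues
    ((Tuple.sort (Matrix.isHermitian_transpose_mul_self A).eigenvalues) i.rev))

noncomputable def ip {n : ℕ} (A B : Matrix (Fin n) (Fin n) ℝ) : ℝ :=
  ∑ i, ∑ j, A i j * B i j

variable {n : ℕ} (A B C : Matrix (Fin n) (Fin n) ℝ)

lemma ip_self_nonneg : 0 ≤ ip A A :=
  Finset.sum_nonneg fun _ _ => Finset.sum_nonneg fun _ _ => mul_self_nonneg _

lemma frob_sq : frob A ^ 2 = ip A A := by
  rw [frob, Real.sq_sqrt]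
  · simp [ip, sq]
  · exact Finset.sum_nonneg fun _ _ => Finset.sum_nonneg fun _ _ => sq_nonneg _

lemma frob_nonneg : 0 ≤ frob A := Real.sqrt_nonneg _

lemma trace_eq_ip : ((Aᵀ * B).trace) = ip A B := by
  rw [Matrix.trace, ip]
  simp only [Matrix.diag_apply, Matrix.mul_apply, Matrix.transpose_apply]
  exact Finset.sum_comm

lemma ip_comm : ip A B = ip B A := by
  simp [ip, mul_comm]

lemma ip_sub_left : ip (A - B) C = ip A C - ip B C := by
  simp [ip, sub_mul, Finset.sum_sub_distrib]

lemma ip_sub_right : ip A (B - C) = ip A B - ip A C := by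
  simp [ip, mul_sub, Finset.sum_sub_distrib]

lemma ip_smul_left (t : ℝ) : ip (t • A) B = t * ip A B := by
  simp [ip, Finset.mul_sum, mul_assoc]

lemma ip_neg_left : ip (-A) B = - ip A B := by
  simp [ip, Finset.sum_neg_distrib]

lemma ip_zero_right : ip A 0 = 0 := by simp [ip]

lemma ip_smul_right (t : ℝ) : ip A (t • B) = t * ip A B := by
  rw [ip_comm, ip_smul_left, ip_comm]

lemma ip_expand (t : ℝ) :
    ip (A - t • B) (A - t • B) = ip A A - 2 * t * ip A B + t ^ 2 * ip B B := by
  rw [ip_sub_left, ip_sub_right, ip_sub_right, ip_smul_left, ip_smul_left,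
    ip_smul_right, ip_smul_right, ip_comm B A]
  ring

lemma frob_neg : frob (-A) = frob A := by
  unfold frob
  congr 1
  apply Finset.sum_congr rfl
  intro i _
  apply Finset.sum_congr rfl
  intro j _
  simp [Matrix.neg_apply]

lemma ip_cs : ip A B ≤ frob A * frob B := by
  have h1 : ip A B ^ 2 ≤ ip A A * ip B B := by
    have h := Finset.sum_mul_sq_le_sq_mul_sq (Finset.univ : Finset (Fin n × Fin n))
      (fun p => A p.1 p.2) (fun p => B p.1 p.2)
    simpa [ip, ← Finset.sum_product', Finset.univ_product_univ, sq] using h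
  have hfa : frob A = Real.sqrt (ip A A) := by
    rw [← frob_sq A, Real.sqrt_sq (frob_nonneg A)]
  have hfb : frob B = Real.sqrt (ip B B) := by
    rw [← frob_sq B, Real.sqrt_sq (frob_nonneg B)]
  calc ip A B ≤ |ip A B| := le_abs_self _
    _ = Real.sqrt (ip A B ^ 2) := (Real.sqrt_sq_eq_abs _).symm
    _ ≤ Real.sqrt (ip A A * ip B B) := Real.sqrt_le_sqrt h1
    _ = Real.sqrt (ip A A) * Real.sqrt (ip B B) := Real.sqrt_mul (ip_self_nonneg A) _
    _ = frob A * frob B := by rw [hfa, hfb]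

lemma psd_smul {t : ℝ} (ht : 0 ≤ t) {A : Matrix (Fin n) (Fin n) ℝ} (hA : A.PosSemidef) :
    (t • A).PosSemidef := by
  constructor
  · show (t • A)ᴴ = t • A
    rw [Matrix.conjTranspose_smul, hA.1]
    simp
  · exact (hA.smul ht).2

lemma psd_combo {t : ℝ} (ht0 : 0 ≤ t) (ht1 : t ≤ 1) {A B : Matrix (Fin n) (Fin n) ℝ}
    (hA : A.PosSemidef) (hB : B.PosSemidef) : (A + t • (B - A)).PosSemidef := by
  have e : A + t • (B - A) = (1 - t) • A + t • B := by
    ext i j; simp [Matrix.add_apply, Matrix.smul_apply, Matrix.sub_apply]; ring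
  rw [e]
  exact (psd_smul (by linarith) hA).add (psd_smul ht0 hB)

/-- Initialization guarantee: for `M`-smooth, `m`-strongly convex `f` over the PSD
cone with minimizer `X*` and `X⁰ = (1/M) P₊(-∇f(0))`,
`‖X⁰ - X*‖_F² ≤ (κ² - 2/κ + 1) ‖X*‖_F²` where `κ = M/m`. -/
theorem stmt7 {n : ℕ} (M m : ℝ) (hm : 0 < m) (hmM : m ≤ M)
    (f : Matrix (Fin n) (Fin n) ℝ → ℝ)
    (g : Matrix (Fin n) (Fin n) ℝ → Matrix (Fin n) (Fin n) ℝ)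
    (hgrad : ∀ X H : Matrix (Fin n) (Fin n) ℝ,
      HasDerivAt (fun t : ℝ => f (X + t • H)) (((g X)ᵀ * H).trace) 0)
    (hsmooth : ∀ X Y : Matrix (Fin n) (Fin n) ℝ, X.PosSemidef → Y.PosSemidef →
      frob (g X - g Y) ≤ M * frob (X - Y))
    (hsc : ∀ X Y : Matrix (Fin n) (Fin n) ℝ, X.PosSemidef → Y.PosSemidef →
      f X + ((g X)ᵀ * (Y - X)).trace + m / 2 * frob (Y - X) ^ 2 ≤ f Y)
    (Xstar : Matrix (Fin n) (Fin n) ℝ) (hXstar : Xstar.PosSemidef)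
    (hopt : ∀ Z : Matrix (Fin n) (Fin n) ℝ, Z.PosSemidef → f Xstar ≤ f Z)
    (Y : Matrix (Fin n) (Fin n) ℝ) (hY : Y.PosSemidef)
    (hproj : ∀ Z : Matrix (Fin n) (Fin n) ℝ, Z.PosSemidef →
      frob (-(g 0) - Y) ≤ frob (-(g 0) - Z)) :
    frob ((1 / M) • Y - Xstar) ^ 2 ≤
      ((M / m) ^ 2 - 2 / (M / m) + 1) * frob Xstar ^ 2 := by
  have hM : 0 < M := lt_of_lt_of_le hm hmM
  set a := frob Xstar with ha
  have ha0 : 0 ≤ a := frob_nonneg Xstar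
  -- first-order optimality condition at Xstar
  have foc : ∀ Z : Matrix (Fin n) (Fin n) ℝ, Z.PosSemidef →
      0 ≤ ip (g Xstar) (Z - Xstar) := by
    intro Z hZ
    have hd := hgrad Xstar (Z - Xstar)
    rw [trace_eq_ip] at hd
    rw [hasDerivAt_iff_tendsto_slope] at hd
    have hsub : Set.Ioi (0:ℝ) ⊆ {(0:ℝ)}ᶜ := fun x hx => ne_of_gt hx
    have hd' := hd.mono_left (nhdsWithin_mono 0 hsub)
    refine ge_of_tendsto hd' ?_
    filter_upwards [Ioc_mem_nhdsGT_of_mem (Set.left_mem_Ico.2 one_pos)] with t ht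
    have hpsd : (Xstar + t • (Z - Xstar)).PosSemidef := psd_combo ht.1.le ht.2 hXstar hZ
    have hle := hopt _ hpsd
    rw [slope_def_field]
    apply div_nonneg
    · simpa using sub_nonneg.2 hle
    · simpa using ht.1.le
  -- variational inequality for the projection Y
  have varineq : ∀ Z : Matrix (Fin n) (Fin n) ℝ, Z.PosSemidef →
      ip (-(g 0) - Y) (Z - Y) ≤ 0 := by
    intro Z hZ
    have key : ∀ t : ℝ, 0 < t → t ≤ 1 →
        2 * ip (-(g 0) - Y) (Z - Y) ≤ t * ip (Z - Y) (Z - Y) := by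
      intro t ht0 ht1
      have hpsd : (Y + t • (Z - Y)).PosSemidef := psd_combo ht0.le ht1 hY hZ
      have h1 := hproj _ hpsd
      have heq : -(g 0) - (Y + t • (Z - Y)) = (-(g 0) - Y) - t • (Z - Y) := by
        ext i j
        simp [Matrix.sub_apply, Matrix.add_apply, Matrix.neg_apply, Matrix.smul_apply]
        ring
      rw [heq] at h1
      have h2 : frob (-(g 0) - Y) ^ 2 ≤ frob ((-(g 0) - Y) - t • (Z - Y)) ^ 2 :=
        pow_le_pow_left₀ (frob_nonneg _) h1 2
      rw [frob_sq, frob_sq, ip_expand] at h2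
      have h4 : t * (2 * ip (-(g 0) - Y) (Z - Y)) ≤ t * (t * ip (Z - Y) (Z - Y)) := by
        nlinarith
      exact (mul_le_mul_iff_right₀ ht0).mp h4
    rcases le_or_gt (ip (Z - Y) (Z - Y)) 0 with hDD | hDD
    · have := key 1 one_pos le_rfl; linarith
    · have h3 : ∀ ε : ℝ, 0 < ε → 2 * ip (-(g 0) - Y) (Z - Y) ≤ 0 + ε := by
        intro ε hε
        have ht0 : 0 < min 1 (ε / ip (Z - Y) (Z - Y)) :=
          lt_min one_pos (div_pos hε hDD)
        have hk := key _ ht0 (min_le_left _ _)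
        have h5 : min 1 (ε / ip (Z - Y) (Z - Y)) * ip (Z - Y) (Z - Y) ≤ ε := by
          calc min 1 (ε / ip (Z - Y) (Z - Y)) * ip (Z - Y) (Z - Y)
              ≤ (ε / ip (Z - Y) (Z - Y)) * ip (Z - Y) (Z - Y) :=
                mul_le_mul_of_nonneg_right (min_le_right _ _) hDD.le
            _ = ε := div_mul_cancel₀ _ hDD.ne'
        linarith
      have := le_of_forall_pos_le_add h3
      linarith
  -- frob (g Xstar - g 0) ≤ M * a
  have hprojG : frob (g Xstar - g 0) ≤ M * a := by
    have h := hsmooth Xstar 0 hXstar Matrix.PosSemidef.zero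
    simpa using h
  -- 0 ≤ ip (g Xstar) Y
  have hgXY : 0 ≤ ip (g Xstar) Y := by
    have h := foc (Xstar + Y) (hXstar.add hY)
    have e : (Xstar + Y) - Xstar = Y := by abel
    rwa [e] at h
  -- ip Y Y ≤ ip (-(g 0)) Y
  have hYY : ip Y Y ≤ ip (-(g 0)) Y := by
    have h := varineq 0 Matrix.PosSemidef.zero
    have e : (0 : Matrix (Fin n) (Fin n) ℝ) - Y = -Y := by abel
    rw [e, ip_sub_left] at h
    have e2 : ip (-(g 0)) (-Y) = - ip (-(g 0)) Y := by
      rw [ip_comm, ip_neg_left, ip_comm]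
    have e3 : ip Y (-Y) = - ip Y Y := by
      rw [ip_comm, ip_neg_left]
    rw [e2, e3] at h
    linarith
  -- frob Y ≤ M * a
  have hfrobY : frob Y ≤ M * a := by
    have h1 : ip (-(g 0)) Y ≤ ip (g Xstar - g 0) Y := by
      have e : ip (g Xstar - g 0) Y = ip (g Xstar) Y - ip (g 0) Y := ip_sub_left _ _ _
      rw [ip_neg_left]
      linarith
    have hcs := ip_cs (g Xstar - g 0) Y
    have h2 : frob Y ^ 2 ≤ (M * a) * frob Y := by
      rw [frob_sq]
      calc ip Y Y ≤ frob (g Xstar - g 0) * frob Y := by linarith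
        _ ≤ (M * a) * frob Y := mul_le_mul_of_nonneg_right hprojG (frob_nonneg Y)
    nlinarith [frob_nonneg Y, mul_nonneg hM.le ha0]
  -- m * a^2 ≤ ip Y Xstar
  have hYX : m * a ^ 2 ≤ ip Y Xstar := by
    have h1 := varineq (Y + Xstar) (hY.add hXstar)
    have e : (Y + Xstar) - Y = Xstar := by abel
    rw [e, ip_sub_left, ip_neg_left] at h1
    -- h1 : - ip (g 0) Xstar - ip Y Xstar ≤ 0
    have h2 := hsc 0 Xstar Matrix.PosSemidef.zero hXstar
    have h3 := hsc Xstar 0 hXstar Matrix.PosSemidef.zero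
    rw [trace_eq_ip] at h2 h3
    have e2 : Xstar - (0 : Matrix (Fin n) (Fin n) ℝ) = Xstar := by abel
    have e3 : (0 : Matrix (Fin n) (Fin n) ℝ) - Xstar = -Xstar := by abel
    rw [e2] at h2
    rw [e3] at h3
    have e4 : ip (g Xstar) (-Xstar) = - ip (g Xstar) Xstar := by
      rw [ip_comm, ip_neg_left, ip_comm]
    rw [e4] at h3
    have e5 : frob (-Xstar) = a := by
      rw [ha, frob_neg]
    rw [e5] at h3
    have h4 : ip (g Xstar) Xstar ≤ 0 := by
      have h := foc 0 Matrix.PosSemidef.zero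
      rw [e3] at h
      have e6 : ip (g Xstar) (-Xstar) = - ip (g Xstar) Xstar := e4
      rw [e6] at h
      linarith
    -- adding h2 and h3 : ip (g 0) Xstar - ip (g Xstar) Xstar + m * a^2 ≤ 0
    have hopt0 : f Xstar ≤ f 0 := hopt 0 Matrix.PosSemidef.zero
    -- from h2 + h3: f 0 + ip (g 0) Xstar + m/2 a² ≤ f Xstar and
    -- f Xstar - ip gXs Xstar + m/2 a² ≤ f 0
    linarith
  -- final computation
  have expand : frob ((1 / M) • Y - Xstar) ^ 2
      = (1 / M) ^ 2 * ip Y Y - 2 * ((1 / M) * ip Y Xstar) + ip Xstar Xstar := by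
    rw [frob_sq, ip_sub_left, ip_sub_right, ip_sub_right, ip_smul_left, ip_smul_left]
    have e1 : ip Y ((1 / M) • Y) = (1 / M) * ip Y Y := by
      rw [ip_comm, ip_smul_left]
    have e2 : ip Xstar ((1 / M) • Y) = (1 / M) * ip Y Xstar := by
      rw [ip_comm, ip_smul_left, ip_comm]
    have e3 : ip Y Xstar = ip Y Xstar := rfl
    rw [e1, e2]
    ring
  have hYY2 : ip Y Y ≤ (M * a) ^ 2 := by
    rw [← frob_sq]
    exact pow_le_pow_left₀ (frob_nonneg Y) hfrobY 2
  have haa : ip Xstar Xstar = a ^ 2 := (frob_sq Xstar).symm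
  have t1 : (1 / M) ^ 2 * ip Y Y ≤ a ^ 2 := by
    calc (1 / M) ^ 2 * ip Y Y ≤ (1 / M) ^ 2 * (M * a) ^ 2 :=
          mul_le_mul_of_nonneg_left hYY2 (sq_nonneg _)
      _ = a ^ 2 := by field_simp
  have t2 : (1 / M) * (m * a ^ 2) ≤ (1 / M) * ip Y Xstar :=
    mul_le_mul_of_nonneg_left hYX (by positivity)
  have hka : 2 / (M / m) = 2 * ((1 / M) * m) := by
    rw [div_div_eq_mul_div]
    field_simp
  have hk1 : 1 ≤ (M / m) ^ 2 := by
    have h1 : 1 ≤ M / m := (one_le_div hm).2 hmM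
    nlinarith
  have ha2 : 0 ≤ a ^ 2 := sq_nonneg a
  rw [expand, haa, hka]
  nlinarith [mul_nonneg (sub_nonneg.2 hk1) ha2, t1, t2]
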